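/- arXiv:2508.18133 — 5 statements merged into one kernel-verified Lean document; each statement's English description precedes it below -/
import Mathlib

section
/- The asymmetric matching distance on timed words over the powerset alphabet, d(w,v) = max(d→(w,v), d→(v,w)), satisfies the triangle inequality and is symmetric with d(w,w) = 0, i.e., it is a pseudometric on timed words. -/
open scoped ENNReal

/-- A timed word over the powerset alphabet: a finite sequence of (set of events, timestamp)
pairs with nonnegative, nondecreasing timestamps. -/
def IsTimedWord {σ : Type*} (w : List (Set σ × ℝ)) : Prop :=
  (∀ p ∈ w, 0 ≤ p.2) ∧ List.Chain' (· ≤ ·) (w.map Prod.snd)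

/-- The asymmetric matching distance: max over positions `i` and letters `a ∈ Aᵢ` of the
min over positions `j` with `a ∈ Bⱼ` of `|tᵢ - sⱼ|` (with `min ∅ = ∞`). -/
noncomputable def dArrow {σ : Type*} (w v : List (Set σ × ℝ)) : ℝ≥0∞ :=
  ⨆ i : Fin w.length, ⨆ a : σ, ⨆ _ : a ∈ (w.get i).1,
    ⨅ j : Fin v.length, ⨅ _ : a ∈ (v.get j).1, ENNReal.ofReal |(w.get i).2 - (v.get j).2|

/-- The symmetrized matching distance. -/
noncomputable def tdist {σ : Type*} (w v : List (Set σ × ℝ)) : ℝ≥0∞ :=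
  max (dArrow w v) (dArrow v w)

lemma dArrow_triangle {σ : Type*} (w v u : List (Set σ × ℝ)) :
    dArrow w u ≤ dArrow w v + dArrow v u := by
  refine iSup_le fun i => iSup_le fun a => iSup_le fun ha => ?_
  have hX : (⨅ k : Fin v.length, ⨅ _ : a ∈ (v.get k).1,
      ENNReal.ofReal |(w.get i).2 - (v.get k).2|) ≤ dArrow w v :=
    le_iSup_of_le i (le_iSup_of_le a (le_iSup_of_le ha le_rfl))
  refine le_trans ?_ (add_le_add hX le_rfl)
  rw [ENNReal.iInf_add]
  refine le_iInf fun k => ?_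
  rw [ENNReal.iInf_add]
  refine le_iInf fun hk => ?_
  have hY : (⨅ j : Fin u.length, ⨅ _ : a ∈ (u.get j).1,
      ENNReal.ofReal |(v.get k).2 - (u.get j).2|) ≤ dArrow v u :=
    le_iSup_of_le k (le_iSup_of_le a (le_iSup_of_le hk le_rfl))
  refine le_trans ?_ (add_le_add le_rfl hY)
  rw [ENNReal.add_iInf]
  refine le_iInf fun j => ?_
  rw [ENNReal.add_iInf]
  refine le_iInf fun hj => ?_
  refine iInf_le_of_le j (le_trans (iInf_le _ hj) ?_)
  rw [← ENNReal.ofReal_add (abs_nonneg _) (abs_nonneg _)]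
  exact ENNReal.ofReal_le_ofReal (abs_sub_le _ _ _)

/-- `tdist` is a pseudometric on timed words: zero on the diagonal, symmetric, and
satisfying the triangle inequality, with values in `[0,∞]`. -/
theorem tdist_pseudometric {σ : Type*} :
    (∀ w : List (Set σ × ℝ), IsTimedWord w → tdist w w = 0) ∧
    (∀ w v : List (Set σ × ℝ), IsTimedWord w → IsTimedWord v → tdist w v = tdist v w) ∧
    (∀ w v u : List (Set σ × ℝ), IsTimedWord w → IsTimedWord v → IsTimedWord u →
      tdist w u ≤ tdist w v + tdist v u) := by
  refine ⟨fun w _ => ?_, fun w v _ _ => max_comm _ _, fun w v u _ _ _ => ?_⟩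
  · have h : dArrow w w = 0 := by
      refine le_antisymm ?_ zero_le
      refine iSup_le fun i => iSup_le fun a => iSup_le fun ha => ?_
      refine iInf_le_of_le i (le_trans (iInf_le _ ha) ?_)
      simp
    simp [tdist, h]
  · have key : dArrow w u ≤ dArrow w v + dArrow v u := dArrow_triangle w v u
    have key2 : dArrow u w ≤ dArrow u v + dArrow v w := dArrow_triangle u v w
    refine max_le (key.trans ?_) (key2.trans ?_)
    · exact add_le_add (le_max_left _ _) (le_max_left _ _)
    · rw [add_comm]
      exact add_le_add (le_max_right _ _) (le_max_right _ _)
end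

section
/- For a regular language L over alphabet 2^Σ, the squeezed language 𝒮L (obtained by factorizing each word arbitrarily and replacing each factor by the union of its letters) is regular. -/
/-- The squeezing of a language over the powerset alphabet: each word of `L` is factorized
arbitrarily and each factor is replaced by the union of its letters. -/
def squeezeLang {σ : Type*} (L : Language (Set σ)) : Language (Set σ) :=
  {w | ∃ Ws : List (List (Set σ)), Ws.flatten ∈ L ∧
        w = Ws.map (fun f => f.foldr (· ∪ ·) ∅)}

private lemma nfa_evalFrom_union {α Q : Type*} (N : NFA α Q) (S : Set Q) (x : List α) :
    N.evalFrom S x = ⋃ s ∈ S, N.evalFrom {s} x := by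
  induction x generalizing S with
  | nil => simp [NFA.evalFrom]
  | cons a x ih =>
    have hstep : ∀ T : Set Q, N.evalFrom T (a :: x) = N.evalFrom (N.stepSet T a) x := by
      intro T; rfl
    rw [hstep, ih]
    have : N.stepSet S a = ⋃ s ∈ S, N.stepSet {s} a := by
      ext q; simp [NFA.mem_stepSet]
    rw [this]
    ext q
    constructor
    · rintro hq
      simp only [Set.mem_iUnion] at hq ⊢
      obtain ⟨t, ⟨s, hs, ht⟩, hq⟩ := hq
      refine ⟨s, hs, ?_⟩
      rw [hstep, ih]
      simp only [Set.mem_iUnion]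
      exact ⟨t, ht, hq⟩
    · rintro hq
      simp only [Set.mem_iUnion] at hq ⊢
      obtain ⟨s, hs, hq⟩ := hq
      rw [hstep, ih] at hq
      simp only [Set.mem_iUnion] at hq
      obtain ⟨t, ht, hq⟩ := hq
      exact ⟨t, ⟨s, hs, ht⟩, hq⟩

/-- If `L` is regular then so is its squeezing `𝒮L`. -/
theorem squeeze_regular {σ : Type*} [Fintype σ] (L : Language (Set σ))
    (hL : L.IsRegular) : (squeezeLang L).IsRegular := by
  obtain ⟨Q, hQ, M, hM⟩ := hL
  classical
  -- NFA whose one-step transitions simulate reading an arbitrary factor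
  let N : NFA (Set σ) Q :=
    { step := fun q a => {q' | ∃ f : List (Set σ), f.foldr (· ∪ ·) ∅ = a ∧ M.evalFrom q f = q'},
      start := {M.start},
      accept := M.accept }
  have key : ∀ (x : List (Set σ)) (q q' : Q),
      q' ∈ N.evalFrom {q} x ↔
        ∃ Ws : List (List (Set σ)), x = Ws.map (fun f => f.foldr (· ∪ ·) ∅) ∧
          M.evalFrom q Ws.flatten = q' := by
    intro x
    induction x with
    | nil =>
      intro q q'
      constructor
      · intro h
        refine ⟨[], rfl, ?_⟩
        simp [NFA.evalFrom] at h
        simp [h]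
      · rintro ⟨Ws, hWs, hq⟩
        have : Ws = [] := by
          cases Ws with
          | nil => rfl
          | cons a l => simp at hWs
        subst this
        simp [DFA.evalFrom] at hq
        simp [NFA.evalFrom, hq]
    | cons a x ih =>
      intro q q'
      have hstep : N.evalFrom {q} (a :: x) = N.evalFrom (N.stepSet {q} a) x := rfl
      rw [hstep, nfa_evalFrom_union]
      constructor
      · intro h
        simp only [Set.mem_iUnion] at h
        obtain ⟨t, ht, h⟩ := h
        rw [NFA.mem_stepSet] at ht
        obtain ⟨s, hs, ht⟩ := ht
        rw [Set.mem_singleton_iff] at hs; subst hs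
        obtain ⟨f, hf, hev⟩ := ht
        rw [ih] at h
        obtain ⟨Ws, hWs, hq⟩ := h
        refine ⟨f :: Ws, ?_, ?_⟩
        · simp [hWs, hf]
        · rw [List.flatten_cons, DFA.evalFrom_of_append, hev, hq]
      · rintro ⟨Ws, hWs, hq⟩
        cases Ws with
        | nil => simp at hWs
        | cons f Ws =>
          simp only [List.map_cons, List.cons.injEq] at hWs
          obtain ⟨ha, hx⟩ := hWs
          simp only [Set.mem_iUnion]
          refine ⟨M.evalFrom q f, ?_, ?_⟩
          · rw [NFA.mem_stepSet]
            exact ⟨q, rfl, f, ha.symm, rfl⟩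
          · rw [ih]
            refine ⟨Ws, hx, ?_⟩
            rw [List.flatten_cons, DFA.evalFrom_of_append] at hq
            exact hq
  have haccepts : N.accepts = squeezeLang L := by
    ext x
    rw [NFA.mem_accepts]
    constructor
    · rintro ⟨S, hS, hev⟩
      rw [key] at hev
      obtain ⟨Ws, hWs, hq⟩ := hev
      refine ⟨Ws, ?_, hWs⟩
      rw [← hM, DFA.mem_accepts]
      show M.evalFrom M.start Ws.flatten ∈ M.accept
      rw [hq]; exact hS
    · rintro ⟨Ws, hL', hWs⟩
      rw [← hM, DFA.mem_accepts] at hL'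
      refine ⟨M.eval Ws.flatten, hL', ?_⟩
      rw [key]
      exact ⟨Ws, hWs, rfl⟩
  exact ⟨Set Q, inferInstance, N.toDFA, by rw [N.toDFA_correct, haccepts]⟩
end

section
/- Let f(n) be the number of n-letter words in the squeezed full language of a strongly connected finite automaton. Then f satisfies the almost-supermultiplicativity f(m+n+1) ≥ f(m)·f(n), and consequently lim_{n→∞} (log f(n))/n exists. -/
open Filter

/-- The language of an NFA where all states are both initial and final. -/
def fullLang {σ Q : Type*} (A : NFA (Set σ) Q) : Language (Set σ) :=
  {w | ∃ p q : Q, q ∈ A.evalFrom {p} w}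

/-- The number of `n`-letter words in the squeezed full language. -/
noncomputable def squeezeCount {σ Q : Type*} (A : NFA (Set σ) Q) (n : ℕ) : ℕ :=
  {w : List (Set σ) | w ∈ squeezeLang (fullLang A) ∧ w.length = n}.ncard

section Aux

variable {σ Q : Type*} (A : NFA (Set σ) Q)

/-- The union of all labels of transitions of `A`. -/
def labelUnion : Set σ := {x | ∃ (p : Q) (B : Set σ) (q : Q), q ∈ A.step p B ∧ x ∈ B}

lemma evalFrom_mono : ∀ (w : List (Set σ)) {S T : Set Q}, S ⊆ T →
    A.evalFrom S w ⊆ A.evalFrom T w := by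
  intro w
  induction w with
  | nil => intro S T h; simpa [NFA.evalFrom] using h
  | cons a w ih =>
    intro S T h
    show A.evalFrom (A.stepSet S a) w ⊆ A.evalFrom (A.stepSet T a) w
    refine ih ?_
    intro s hs
    rw [NFA.mem_stepSet] at hs ⊢
    obtain ⟨t, ht, hst⟩ := hs
    exact ⟨t, h ht, hst⟩

lemma evalFrom_append' (S : Set Q) (w1 w2 : List (Set σ)) :
    A.evalFrom S (w1 ++ w2) = A.evalFrom (A.evalFrom S w1) w2 := by
  simp [NFA.evalFrom, List.foldl_append]

lemma evalFrom_trans {p p' q : Q} {w1 w2 : List (Set σ)}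
    (h1 : p' ∈ A.evalFrom {p} w1) (h2 : q ∈ A.evalFrom {p'} w2) :
    q ∈ A.evalFrom {p} (w1 ++ w2) := by
  rw [evalFrom_append']
  exact evalFrom_mono A w2 (Set.singleton_subset_iff.mpr h1) h2

lemma nonempty_of_evalFrom {q : Q} : ∀ {w : List (Set σ)} {S : Set Q},
    q ∈ A.evalFrom S w → S.Nonempty := by
  intro w
  induction w with
  | nil => intro S h; exact ⟨q, h⟩
  | cons a w ih =>
    intro S h
    have h' : (A.stepSet S a).Nonempty := ih h
    obtain ⟨s, hs⟩ := h'
    rw [NFA.mem_stepSet] at hs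
    obtain ⟨t, ht, _⟩ := hs
    exact ⟨t, ht⟩

lemma letters_subset {q : Q} : ∀ {w : List (Set σ)} {S : Set Q},
    q ∈ A.evalFrom S w → ∀ B ∈ w, B ⊆ labelUnion A := by
  intro w
  induction w with
  | nil => intro S _ B hB; simp at hB
  | cons a w ih =>
    intro S h B hB
    rcases List.mem_cons.mp hB with rfl | hB'
    · have hne : (A.stepSet S B).Nonempty := nonempty_of_evalFrom A h
      obtain ⟨s, hs⟩ := hne
      rw [NFA.mem_stepSet] at hs
      obtain ⟨t, _, hst⟩ := hs
      intro x hx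
      exact ⟨t, B, s, hst, hx⟩
    · exact ih h B hB'

lemma mem_foldr_union (x : σ) : ∀ (M : List (Set σ)),
    (x ∈ M.foldr (· ∪ ·) ∅ ↔ ∃ B ∈ M, x ∈ B) := by
  intro M
  induction M with
  | nil => simp
  | cons a M ih => simp [ih]

lemma cover_lemma (hconn : ∀ p q : Q, ∃ w : List (Set σ), q ∈ A.evalFrom {p} w) :
    ∀ (L : List (Set σ)), (∀ B ∈ L, ∃ p q, q ∈ A.step p B) →
      ∀ p q : Q, ∃ M, q ∈ A.evalFrom {p} M ∧ ∀ B ∈ L, B ∈ M := by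
  intro L
  induction L with
  | nil =>
    intro _ p q
    obtain ⟨w, hw⟩ := hconn p q
    exact ⟨w, hw, by simp⟩
  | cons a L ih =>
    intro h p q
    obtain ⟨pa, qa, ha⟩ := h a List.mem_cons_self
    obtain ⟨w1, hw1⟩ := hconn p pa
    obtain ⟨M, hM, hcov⟩ := ih (fun B hB => h B (List.mem_cons_of_mem _ hB)) qa q
    refine ⟨w1 ++ a :: M, ?_, ?_⟩
    · refine evalFrom_trans A hw1 ?_
      show q ∈ A.evalFrom (A.stepSet {pa} a) M
      refine evalFrom_mono A M ?_ hM
      intro s hs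
      rw [Set.mem_singleton_iff] at hs
      subst hs
      rw [NFA.mem_stepSet]
      exact ⟨pa, rfl, ha⟩
    · intro B hB
      rcases List.mem_cons.mp hB with rfl | hB'
      · exact List.mem_append_right _ List.mem_cons_self
      · exact List.mem_append_right _ (List.mem_cons_of_mem _ (hcov B hB'))

lemma bridge [Finite (Set σ)] (hconn : ∀ p q : Q, ∃ w : List (Set σ), q ∈ A.evalFrom {p} w)
    (p q : Q) :
    ∃ M : List (Set σ), q ∈ A.evalFrom {p} M ∧ M.foldr (· ∪ ·) ∅ = labelUnion A := by
  classical
  set T : Set (Set σ) := {B | ∃ p q, q ∈ A.step p B} with hT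
  have hTfin : T.Finite := Set.toFinite T
  obtain ⟨M, hM, hcov⟩ := cover_lemma A hconn hTfin.toFinset.toList
    (fun B hB => by
      rw [Finset.mem_toList, Set.Finite.mem_toFinset] at hB
      exact hB) p q
  refine ⟨M, hM, ?_⟩
  ext x
  rw [mem_foldr_union]
  constructor
  · rintro ⟨B, hBM, hx⟩
    exact letters_subset A hM B hBM hx
  · rintro ⟨p', B, q', hstep, hx⟩
    have hBT : B ∈ T := ⟨p', q', hstep⟩
    have hBM : B ∈ M := hcov B (by rwa [Finset.mem_toList, Set.Finite.mem_toFinset])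
    exact ⟨B, hBM, hx⟩

lemma nil_mem_squeeze (q0 : Q) : ([] : List (Set σ)) ∈ squeezeLang (fullLang A) := by
  refine ⟨[], ⟨q0, q0, ?_⟩, rfl⟩
  simp [NFA.evalFrom]

lemma squeeze_append [Finite (Set σ)]
    (hconn : ∀ p q : Q, ∃ w : List (Set σ), q ∈ A.evalFrom {p} w)
    {v w : List (Set σ)} (hv : v ∈ squeezeLang (fullLang A))
    (hw : w ∈ squeezeLang (fullLang A)) :
    v ++ labelUnion A :: w ∈ squeezeLang (fullLang A) := by
  obtain ⟨Ws, ⟨p, p', hp⟩, rfl⟩ := hv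
  obtain ⟨Ws', ⟨q', q, hq⟩, rfl⟩ := hw
  obtain ⟨M, hM, hMU⟩ := bridge A hconn p' q'
  refine ⟨Ws ++ M :: Ws', ⟨p, q, ?_⟩, ?_⟩
  · have hflat : (Ws ++ M :: Ws').flatten = Ws.flatten ++ (M ++ Ws'.flatten) := by simp
    rw [hflat]
    exact evalFrom_trans A hp (evalFrom_trans A hM hq)
  · simp [hMU]

lemma replicate_mem_squeeze [Finite (Set σ)]
    (hconn : ∀ p q : Q, ∃ w : List (Set σ), q ∈ A.evalFrom {p} w) (q0 : Q) :
    ∀ n : ℕ, List.replicate n (labelUnion A) ∈ squeezeLang (fullLang A) := by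
  intro n
  induction n with
  | zero => exact nil_mem_squeeze A q0
  | succ n ih =>
    rw [List.replicate_succ]
    have := squeeze_append A hconn (nil_mem_squeeze A q0) ih
    simpa using this

lemma squeezeCount_le [Finite (Set σ)] (n : ℕ) :
    squeezeCount A n ≤ Nat.card (Set σ) ^ n := by
  classical
  have hsub : {w : List (Set σ) | w ∈ squeezeLang (fullLang A) ∧ w.length = n}
      ⊆ {w : List (Set σ) | w.length = n} := fun w hw => hw.2
  have h1 : squeezeCount A n ≤ {w : List (Set σ) | w.length = n}.ncard :=
    Set.ncard_le_ncard hsub (List.finite_length_eq (Set σ) n)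
  refine h1.trans ?_
  rw [← Nat.card_coe_set_eq]
  have h2 : Nat.card ↥{w : List (Set σ) | w.length = n} ≤ Nat.card (Fin n → Set σ) := by
    refine Nat.card_le_card_of_injective
      (fun w i => w.1.get (Fin.cast w.2.symm i)) ?_
    intro ⟨w, hw⟩ ⟨w', hw'⟩ h
    have hww' : w.length = w'.length := hw.trans hw'.symm
    refine Subtype.ext (List.ext_get hww' ?_)
    intro i h1' h2'
    have := congrFun h ⟨i, by rw [← hw]; exact h1'⟩
    simpa [Fin.cast] using this
  refine h2.trans_eq ?_
  rw [Nat.card_fun]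
  congr 1
  simp [Nat.card_eq_fintype_card]

end Aux

/-- For a strongly connected finite automaton with at least one transition, the count
`f(n)` of `n`-letter squeezed words of the full language is almost supermultiplicative:
`f(m)·f(n) ≤ f(m+n+1)`; consequently `(log f(n))/n` converges (in the extended reals). -/
theorem squeezeCount_supermultiplicative {σ Q : Type*} [Fintype σ] [Fintype Q]
    (A : NFA (Set σ) Q)
    (hconn : ∀ p q : Q, ∃ w : List (Set σ), q ∈ A.evalFrom {p} w)
    (htrans : ∃ (p : Q) (B : Set σ) (q : Q), q ∈ A.step p B) :
    (∀ m n : ℕ, squeezeCount A m * squeezeCount A n ≤ squeezeCount A (m + n + 1)) ∧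
    ∃ l : EReal, Tendsto
      (fun n : ℕ => ((Real.log (squeezeCount A n) / n : ℝ) : EReal)) atTop (nhds l) := by
  classical
  obtain ⟨q0, B0, q1, hstep0⟩ := htrans
  set U := labelUnion A with hU
  set SS : ℕ → Set (List (Set σ)) :=
    fun n => {w : List (Set σ) | w ∈ squeezeLang (fullLang A) ∧ w.length = n} with hSS
  have hfin : ∀ n, (SS n).Finite := fun n =>
    (List.finite_length_eq (Set σ) n).subset (fun w hw => hw.2)
  have hcount : ∀ n, squeezeCount A n = (SS n).ncard := fun n => rfl
  -- Part 1: the inequality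
  have key : ∀ m n : ℕ, squeezeCount A m * squeezeCount A n ≤ squeezeCount A (m + n + 1) := by
    intro m n
    have : Finite ↥(SS (m + n + 1)) := (hfin _).to_subtype
    rw [hcount, hcount, hcount, ← Nat.card_coe_set_eq, ← Nat.card_coe_set_eq,
      ← Nat.card_coe_set_eq, ← Nat.card_prod]
    refine Nat.card_le_card_of_injective
      (fun x : ↥(SS m) × ↥(SS n) =>
        (⟨x.1.1 ++ U :: x.2.1, by
          constructor
          · exact squeeze_append A hconn x.1.2.1 x.2.2.1
          · have h1 := x.1.2.2
            have h2 := x.2.2.2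
            simp only [List.length_append, List.length_cons, h1, h2]
            omega⟩ : ↥(SS (m + n + 1)))) ?_
    rintro ⟨⟨v, hv⟩, ⟨w, hw⟩⟩ ⟨⟨v', hv'⟩, ⟨w', hw'⟩⟩ h
    have h' : v ++ U :: w = v' ++ U :: w' := congrArg Subtype.val h
    have hlen : v.length = v'.length := hv.2.trans hv'.2.symm
    obtain ⟨hvv, hcw⟩ := List.append_inj h' hlen
    have hww : w = w' := by injection hcw
    simp [hvv, hww]
  refine ⟨key, ?_⟩
  -- positivity and base values
  have hpos : ∀ n, 1 ≤ squeezeCount A n := by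
    intro n
    rw [hcount]
    refine (Set.ncard_pos (hfin n)).mpr ?_
    exact ⟨List.replicate n U, replicate_mem_squeeze A hconn q0 n, List.length_replicate⟩
  have h0 : squeezeCount A 0 = 1 := by
    rw [hcount]
    have : SS 0 = {([] : List (Set σ))} := by
      ext w
      simp only [hSS, Set.mem_setOf_eq, Set.mem_singleton_iff]
      constructor
      · rintro ⟨_, hlen⟩; exact List.length_eq_zero_iff.mp hlen
      · rintro rfl; exact ⟨nil_mem_squeeze A q0, rfl⟩
    rw [this, Set.ncard_singleton]
  -- the subadditive sequence
  set u : ℕ → ℝ := fun n => -Real.log (squeezeCount A (n - 1)) with hu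
  have hu0 : u 0 = 0 := by simp [hu, h0]
  have hsub : Subadditive u := by
    intro m n
    rcases m with - | m'
    · simp [hu0]
    rcases n with - | n'
    · simp [hu0]
    have hkey := key m' n'
    have hfm : (1 : ℝ) ≤ (squeezeCount A m' : ℝ) := by exact_mod_cast hpos m'
    have hfn : (1 : ℝ) ≤ (squeezeCount A n' : ℝ) := by exact_mod_cast hpos n'
    have hlog : Real.log (squeezeCount A m') + Real.log (squeezeCount A n')
        ≤ Real.log (squeezeCount A (m' + n' + 1)) := by
      rw [← Real.log_mul (by linarith) (by linarith)]
      refine Real.log_le_log (by nlinarith) ?_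
      have : ((squeezeCount A m' * squeezeCount A n' : ℕ) : ℝ)
          ≤ ((squeezeCount A (m' + n' + 1) : ℕ) : ℝ) := by exact_mod_cast hkey
      push_cast at this
      linarith
    have he1 : (m' + 1 + (n' + 1) - 1 : ℕ) = m' + n' + 1 := by omega
    have he2 : (m' + 1 - 1 : ℕ) = m' := by omega
    have he3 : (n' + 1 - 1 : ℕ) = n' := by omega
    simp only [hu, he1, he2, he3]
    linarith
  -- boundedness below
  set K : ℕ := Nat.card (Set σ) with hK
  have hK1 : 1 ≤ K := Nat.card_pos
  have hKR : (1 : ℝ) ≤ (K : ℝ) := by exact_mod_cast hK1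
  have hlogK : 0 ≤ Real.log K := Real.log_nonneg hKR
  have hbound : ∀ n : ℕ, 1 ≤ n → Real.log (squeezeCount A (n - 1)) ≤ n * Real.log K := by
    intro n hn
    have h1 : squeezeCount A (n - 1) ≤ K ^ (n - 1) := squeezeCount_le A (n - 1)
    have h2 : K ^ (n - 1) ≤ K ^ n := Nat.pow_le_pow_right hK1 (Nat.sub_le n 1)
    have h3 : (squeezeCount A (n - 1) : ℝ) ≤ ((K : ℝ)) ^ n := by
      have := h1.trans h2
      exact_mod_cast this
    have h4 : (0 : ℝ) < (squeezeCount A (n - 1) : ℝ) := by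
      have := hpos (n - 1); positivity
    calc Real.log (squeezeCount A (n - 1)) ≤ Real.log ((K : ℝ) ^ n) := Real.log_le_log h4 h3
      _ = n * Real.log K := Real.log_pow _ _
  have hbdd : BddBelow (Set.range fun n : ℕ => u n / n) := by
    refine ⟨min 0 (-Real.log K), ?_⟩
    rintro x ⟨n, rfl⟩
    rcases Nat.eq_zero_or_pos n with rfl | hn
    · simp
    · refine le_trans (min_le_right _ _) ?_
      have hnR : (0 : ℝ) < n := by exact_mod_cast hn
      rw [le_div_iff₀ hnR]
      have := hbound n hn
      simp only [hu]
      nlinarith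
  -- limit for the shifted sequence
  have hlim := hsub.tendsto_lim hbdd
  set L : ℝ := -hsub.lim with hL
  have h1 : Tendsto (fun n : ℕ => Real.log (squeezeCount A (n - 1)) / n) atTop (nhds L) := by
    have := hlim.neg
    refine this.congr ?_
    intro n
    simp [hu, neg_div]
  have h2 : Tendsto (fun n : ℕ => Real.log (squeezeCount A n) / ((n : ℝ) + 1)) atTop
      (nhds L) := by
    have := h1.comp (tendsto_add_atTop_nat 1)
    refine this.congr ?_
    intro n
    simp [Function.comp]
  have h3 : Tendsto (fun n : ℕ => ((n : ℝ) + 1) / n) atTop (nhds 1) := by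
    have h3' : Tendsto (fun n : ℕ => 1 + 1 / (n : ℝ)) atTop (nhds (1 + 0)) :=
      tendsto_const_nhds.add tendsto_one_div_atTop_nhds_zero_nat
    rw [add_zero] at h3'
    refine h3'.congr' ?_
    filter_upwards [eventually_ge_atTop 1] with n hn
    have hnR : (n : ℝ) ≠ 0 := by
      have : (0 : ℝ) < n := by exact_mod_cast hn
      linarith
    field_simp
  have h4 : Tendsto (fun n : ℕ => Real.log (squeezeCount A n) / n) atTop (nhds L) := by
    have := h2.mul h3
    rw [mul_one] at this
    refine this.congr' ?_
    filter_upwards [eventually_ge_atTop 1] with n hn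
    have hnR : (n : ℝ) ≠ 0 := by
      have : (0 : ℝ) < n := by exact_mod_cast hn
      linarith
    have hn1R : (n : ℝ) + 1 ≠ 0 := by positivity
    field_simp
  exact ⟨(L : EReal), EReal.tendsto_coe.mpr h4⟩
end

section
/- In a strongly connected finite automaton A over 2^Σ, for any states p, q, the number of n-letter squeezed words from p to q and the number of n-letter squeezed words in the full language differ by at most a constant multiplicative factor: #𝒮_{n−2} L_full ≤ #𝒮ₙ (ᵖqL) ≤ #𝒮ₙ L_full and #𝒮ₙ L_full ≤ 2^{2·#Σ} · #𝒮_{n−2} L_full. -/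
namespace SqueezeAux
variable {σ Q : Type*} (A : NFA (Set σ) Q)

def fold (w : List (Set σ)) : Set σ := w.foldr (· ∪ ·) ∅

lemma mem_fold {a : σ} {w : List (Set σ)} : a ∈ fold w ↔ ∃ B ∈ w, a ∈ B := by
  induction w with
  | nil => simp [fold]
  | cons B w ih => simp [fold, List.foldr_cons] at ih ⊢; rw [ih]

lemma evalFrom_append (S : Set Q) (u v : List (Set σ)) :
    A.evalFrom S (u ++ v) = A.evalFrom (A.evalFrom S u) v :=
  List.foldl_append

lemma mem_evalFrom_iff {x : Q} {S : Set Q} {w : List (Set σ)} :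
    x ∈ A.evalFrom S w ↔ ∃ r ∈ S, x ∈ A.evalFrom {r} w := by
  induction w generalizing S with
  | nil => simp [NFA.evalFrom]
  | cons a w ih =>
    constructor
    · intro hx
      rw [show A.evalFrom S (a :: w) = A.evalFrom (A.stepSet S a) w from rfl, ih] at hx
      obtain ⟨y, hy, hxy⟩ := hx
      rw [NFA.mem_stepSet] at hy
      obtain ⟨r, hr, hy⟩ := hy
      refine ⟨r, hr, ?_⟩
      rw [show A.evalFrom {r} (a :: w) = A.evalFrom (A.stepSet {r} a) w from rfl, ih]
      exact ⟨y, by rw [NFA.mem_stepSet]; exact ⟨r, rfl, hy⟩, hxy⟩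
    · rintro ⟨r, hr, hx⟩
      rw [show A.evalFrom {r} (a :: w) = A.evalFrom (A.stepSet {r} a) w from rfl, ih] at hx
      obtain ⟨y, hy, hxy⟩ := hx
      rw [NFA.mem_stepSet] at hy
      obtain ⟨r', hr', hy⟩ := hy
      rw [Set.mem_singleton_iff] at hr'; subst hr'
      rw [show A.evalFrom S (a :: w) = A.evalFrom (A.stepSet S a) w from rfl, ih]
      exact ⟨y, by rw [NFA.mem_stepSet]; exact ⟨r', hr, hy⟩, hxy⟩

/-- The union of all transition labels of `A`. -/
def bigU : Set σ := {c | ∃ s B t, t ∈ A.step s B ∧ c ∈ B}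

lemma letters_subset {x : Q} {S : Set Q} {w : List (Set σ)} (hx : x ∈ A.evalFrom S w) :
    ∀ a ∈ w, a ⊆ bigU A := by
  induction w generalizing S with
  | nil => simp
  | cons a w ih =>
    rw [show A.evalFrom S (a :: w) = A.evalFrom (A.stepSet S a) w from rfl] at hx
    intro b hb
    rcases List.mem_cons.1 hb with rfl | hb
    · rw [mem_evalFrom_iff] at hx
      obtain ⟨y, hy, -⟩ := hx
      rw [NFA.mem_stepSet] at hy
      obtain ⟨r, -, hy⟩ := hy
      intro c hc
      exact ⟨r, b, y, hy, hc⟩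
    · exact ih hx b hb

lemma exists_walk (hconn : ∀ p q : Q, ∃ w : List (Set σ), q ∈ A.evalFrom {p} w)
    (l : List (Q × Set σ × Q)) (hl : ∀ x ∈ l, x.2.2 ∈ A.step x.1 x.2.1) (p q : Q) :
    ∃ w, q ∈ A.evalFrom {p} w ∧ ∀ x ∈ l, x.2.1 ⊆ fold w := by
  induction l generalizing p with
  | nil => obtain ⟨w, hw⟩ := hconn p q; exact ⟨w, hw, by simp⟩
  | cons x l ih =>
    obtain ⟨s, B, t⟩ := x
    obtain ⟨w', hw', hl'⟩ := ih (fun y hy => hl y (List.mem_cons_of_mem _ hy)) t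
    obtain ⟨w₀, hw₀⟩ := hconn p s
    refine ⟨w₀ ++ B :: w', ?_, ?_⟩
    · rw [show w₀ ++ B :: w' = (w₀ ++ [B]) ++ w' by simp, evalFrom_append, mem_evalFrom_iff]
      refine ⟨t, ?_, hw'⟩
      rw [evalFrom_append, NFA.evalFrom_singleton, NFA.mem_stepSet]
      exact ⟨s, hw₀, hl (s, B, t) List.mem_cons_self⟩
    · intro y hy
      rcases List.mem_cons.1 hy with rfl | hy
      · intro c hc; rw [mem_fold]; exact ⟨B, by simp, hc⟩
      · intro c hc
        have h2 := hl' y hy hc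
        rw [mem_fold] at h2 ⊢
        obtain ⟨D, hD, hcD⟩ := h2
        exact ⟨D, by simp [hD], hcD⟩

lemma exists_univWalk [Fintype σ] [Fintype Q]
    (hconn : ∀ p q : Q, ∃ w : List (Set σ), q ∈ A.evalFrom {p} w) (p q : Q) :
    ∃ w, q ∈ A.evalFrom {p} w ∧ fold w = bigU A := by
  classical
  have hfin : {x : Q × Set σ × Q | x.2.2 ∈ A.step x.1 x.2.1}.Finite := Set.toFinite _
  obtain ⟨w, hw, hsub⟩ := exists_walk A hconn hfin.toFinset.toList
    (by intro x hx; rw [Finset.mem_toList, Set.Finite.mem_toFinset] at hx; exact hx) p q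
  refine ⟨w, hw, Set.Subset.antisymm ?_ ?_⟩
  · intro c hc
    rw [mem_fold] at hc
    obtain ⟨B, hB, hcB⟩ := hc
    exact letters_subset A hw B hB hcB
  · rintro c ⟨s, B, t, ht, hc⟩
    exact hsub (s, B, t) (by rw [Finset.mem_toList, Set.Finite.mem_toFinset]; exact ht) hc

end SqueezeAux

/-- The language of an NFA with single initial state `p` and single final state `q`. -/
def pqLang {σ Q : Type*} (A : NFA (Set σ) Q) (p q : Q) : Language (Set σ) :=
  {w | q ∈ A.evalFrom {p} w}

/-- Number of `n`-letter words of the squeezed language `𝒮 L`. -/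
noncomputable def sCount {σ : Type*} (L : Language (Set σ)) (n : ℕ) : ℕ :=
  {w : List (Set σ) | w ∈ squeezeLang L ∧ w.length = n}.ncard

namespace SqueezeAux

lemma sSet_finite {σ : Type*} [Fintype σ] (L : Language (Set σ)) (n : ℕ) :
    {w : List (Set σ) | w ∈ squeezeLang L ∧ w.length = n}.Finite :=
  (List.finite_length_eq _ n).subset (fun _ hw => hw.2)

end SqueezeAux

/-- In a strongly connected finite automaton, counts of squeezed words from `p` to `q`
and of the full language differ only by a constant multiplicative factor:
`#𝒮_{n−2}L_full ≤ #𝒮ₙ(ᵖqL) ≤ #𝒮ₙL_full` and `#𝒮ₙL_full ≤ 2^{2·#Σ}·#𝒮_{n−2}L_full`. -/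
theorem squeeze_pq_vs_full {σ Q : Type*} [Fintype σ] [Fintype Q]
    (A : NFA (Set σ) Q)
    (hconn : ∀ p q : Q, ∃ w : List (Set σ), q ∈ A.evalFrom {p} w)
    (htrans : ∃ (p : Q) (B : Set σ) (q : Q), q ∈ A.step p B)
    (p q : Q) (n : ℕ) (hn : 2 ≤ n) :
    sCount (fullLang A) (n - 2) ≤ sCount (pqLang A p q) n ∧
    sCount (pqLang A p q) n ≤ sCount (fullLang A) n ∧
    sCount (fullLang A) n ≤ 2 ^ (2 * Fintype.card σ) * sCount (fullLang A) (n - 2) := by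
  classical
  open SqueezeAux in
  set U : Set σ := SqueezeAux.bigU A with hU
  set Sfull : ℕ → Set (List (Set σ)) :=
    fun m => {w : List (Set σ) | w ∈ squeezeLang (fullLang A) ∧ w.length = m} with hSfull
  set Spq : Set (List (Set σ)) :=
    {w : List (Set σ) | w ∈ squeezeLang (pqLang A p q) ∧ w.length = n} with hSpq
  have hfin : ∀ m, (Sfull m).Finite := fun m => SqueezeAux.sSet_finite _ m
  have hfinpq : Spq.Finite := SqueezeAux.sSet_finite _ n
  -- Part 2 : pq ⊆ full
  have part2 : sCount (pqLang A p q) n ≤ sCount (fullLang A) n := by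
    apply Set.ncard_le_ncard _ (hfin n)
    rintro w ⟨⟨Ws, hWs, rfl⟩, hlen⟩
    exact ⟨⟨Ws, ⟨p, q, hWs⟩, rfl⟩, hlen⟩
  -- Part 1 : injection W ↦ U :: W ++ [U]
  have part1 : sCount (fullLang A) (n - 2) ≤ sCount (pqLang A p q) n := by
    set g : List (Set σ) → List (Set σ) := fun W => U :: (W ++ [U]) with hg
    have himg : g '' Sfull (n - 2) ⊆ Spq := by
      rintro _ ⟨W, ⟨⟨Ws, ⟨p', q', hw⟩, rfl⟩, hlen⟩, rfl⟩
      obtain ⟨w₁, hw₁, hf₁⟩ := SqueezeAux.exists_univWalk A hconn p p'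
      obtain ⟨w₂, hw₂, hf₂⟩ := SqueezeAux.exists_univWalk A hconn q' q
      refine ⟨⟨w₁ :: (Ws ++ [w₂]), ?_, ?_⟩, ?_⟩
      · show q ∈ A.evalFrom {p} (w₁ :: (Ws ++ [w₂])).flatten
        have : (w₁ :: (Ws ++ [w₂])).flatten = w₁ ++ Ws.flatten ++ w₂ := by simp
        rw [this, SqueezeAux.evalFrom_append, SqueezeAux.evalFrom_append,
            SqueezeAux.mem_evalFrom_iff]
        refine ⟨q', ?_, hw₂⟩
        rw [SqueezeAux.mem_evalFrom_iff]
        exact ⟨p', hw₁, hw⟩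
      · show g _ = _
        have e1 : (w₁.foldr (· ∪ ·) ∅ : Set σ) = U := hf₁
        have e2 : (w₂.foldr (· ∪ ·) ∅ : Set σ) = U := hf₂
        simp [hg, e1, e2]
      · show (g _).length = n
        simp only [hg, List.length_cons, List.length_append, List.length_map,
          List.length_cons, List.length_nil]
        have : Ws.length = n - 2 := by simpa using hlen
        omega
    have hinj : Set.InjOn g (Sfull (n - 2)) := by
      intro W₁ _ W₂ _ h
      simp only [hg, List.cons.injEq] at h
      exact List.append_cancel_right h.2
    calc sCount (fullLang A) (n - 2) = (g '' Sfull (n - 2)).ncard :=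
          (Set.ncard_image_of_injOn hinj).symm
      _ ≤ Spq.ncard := Set.ncard_le_ncard himg hfinpq
  -- Part 3
  have part3 : sCount (fullLang A) n ≤ 2 ^ (2 * Fintype.card σ) * sCount (fullLang A) (n - 2) := by
    set F : Finset (List (Set σ)) := (hfin (n - 2)).toFinset with hF
    set g' : Set σ × List (Set σ) × Set σ → List (Set σ) :=
      fun x => x.1 :: (x.2.1 ++ [x.2.2]) with hg'
    set G : Finset (Set σ × List (Set σ) × Set σ) :=
      Finset.univ ×ˢ F ×ˢ Finset.univ with hG
    have hcover : Sfull n ⊆ ↑(G.image g') := by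
      rintro V ⟨⟨Ws, hfull, rfl⟩, hlen⟩
      have hWlen : Ws.length = n := by simpa using hlen
      cases Ws with
      | nil => simp at hWlen; omega
      | cons B₁ rest =>
        rcases rest.eq_nil_or_concat' with rfl | ⟨Ms, B₂, rfl⟩
        · simp at hWlen; omega
        · obtain ⟨p', q', hq'⟩ := hfull
          have hq2 : q' ∈ A.evalFrom {p'} (B₁ ++ (Ms.flatten ++ B₂)) := by
            simpa using hq'
          rw [SqueezeAux.evalFrom_append, SqueezeAux.evalFrom_append,
            SqueezeAux.mem_evalFrom_iff] at hq2
          obtain ⟨s, hs, -⟩ := hq2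
          rw [SqueezeAux.mem_evalFrom_iff] at hs
          obtain ⟨r, -, hrs⟩ := hs
          refine Finset.mem_coe.2 (Finset.mem_image.2
            ⟨(B₁.foldr (· ∪ ·) ∅, Ms.map (fun f => f.foldr (· ∪ ·) ∅), B₂.foldr (· ∪ ·) ∅),
              ?_, ?_⟩)
          · rw [hG, Finset.mem_product, Finset.mem_product]
            refine ⟨Finset.mem_univ _, ?_, Finset.mem_univ _⟩
            rw [hF, Set.Finite.mem_toFinset]
            refine ⟨⟨Ms, ⟨r, s, hrs⟩, rfl⟩, ?_⟩
            have : (B₁ :: (Ms ++ [B₂])).length = n := hWlen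
            simp at this ⊢
            omega
          · simp [hg']
    calc sCount (fullLang A) n ≤ (↑(G.image g') : Set (List (Set σ))).ncard :=
          Set.ncard_le_ncard hcover (G.image g').finite_toSet
      _ = (G.image g').card := Set.ncard_coe_finset _
      _ ≤ G.card := Finset.card_image_le
      _ = 2 ^ Fintype.card σ * ((Sfull (n - 2)).ncard * 2 ^ Fintype.card σ) := by
          rw [hG, Finset.card_product, Finset.card_product, Finset.card_univ,
            Fintype.card_set, hF, ← Set.ncard_eq_toFinset_card _ (hfin (n - 2))]
      _ = 2 ^ (2 * Fintype.card σ) * (Sfull (n - 2)).ncard := by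
          rw [two_mul, pow_add]; ring
      _ = 2 ^ (2 * Fintype.card σ) * sCount (fullLang A) (n - 2) := rfl
  exact ⟨part1, part2, part3⟩
end

section
/- Let G be a finite directed graph with edge rewards w(e) ≥ 0 and edge times t(e) ≥ 0 such that every cycle has total time ≥ 1, and let α > 0 be the maximum of w(C)/t(C) over all simple cycles C. Then there is a constant K such that every path π in G satisfies w(π) ≤ α·t(π) + K. -/
/-- `es` is a path in the directed multigraph given by `src`, `tgt`. -/
def IsGPath {V E : Type*} (src tgt : E → V) (es : List E) : Prop :=
  es.Chain' (fun a b => tgt a = src b)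

/-- `es` is a (nonempty) cycle. -/
def IsGCycle {V E : Type*} (src tgt : E → V) (es : List E) : Prop :=
  IsGPath src tgt es ∧ es ≠ [] ∧
    ∃ e₀ ∈ es.head?, ∃ e₁ ∈ es.getLast?, tgt e₁ = src e₀

/-- A simple cycle: a cycle visiting no vertex twice. -/
def IsSimpleGCycle {V E : Type*} (src tgt : E → V) (es : List E) : Prop :=
  IsGCycle src tgt es ∧ (es.map src).Nodup

/-- If the sources along a list are not nodup, we can split off a duplicate pair. -/
lemma exists_dup_decomp {E V : Type*} (f : E → V) :
    ∀ l : List E, ¬ (l.map f).Nodup →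
      ∃ (a : List E) (e₁ : E) (b : List E) (e₂ : E) (c : List E),
        l = a ++ e₁ :: (b ++ e₂ :: c) ∧ f e₁ = f e₂ := by
  intro l
  induction l with
  | nil => intro h; simp at h
  | cons e rest ih =>
    intro h
    rw [List.map_cons, List.nodup_cons] at h
    push_neg at h
    by_cases hmem : f e ∈ rest.map f
    · obtain ⟨e₂, he₂, hfe⟩ := List.mem_map.mp hmem
      obtain ⟨b, c, hbc⟩ := List.append_of_mem he₂
      exact ⟨[], e, b, e₂, c, by simp [hbc], hfe.symm⟩
    · obtain ⟨a, e₁, b, e₂, c, hl, hf⟩ := ih (h hmem)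
      exact ⟨e :: a, e₁, b, e₂, c, by simp [hl], hf⟩

/-- From a decomposed path with a repeated source, extract a cycle and a shortcut path. -/
lemma cycle_and_path_of_decomp {V E : Type*} (src tgt : E → V)
    (a : List E) (e₁ : E) (b : List E) (e₂ : E) (c : List E)
    (hf : src e₁ = src e₂)
    (hp : IsGPath src tgt (a ++ e₁ :: (b ++ e₂ :: c))) :
    IsGCycle src tgt (e₁ :: b) ∧ IsGPath src tgt (a ++ e₂ :: c) := by
  have hmid : (e₁ :: (b ++ e₂ :: c)) = (e₁ :: b) ++ (e₂ :: c) := by simp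
  rw [IsGPath, List.Chain', List.isChain_append] at hp
  obtain ⟨hca, hrest, hjunc1⟩ := hp
  rw [hmid, List.isChain_append] at hrest
  obtain ⟨hc1, hc2, hjunc2⟩ := hrest
  have hne1 : (e₁ :: b) ≠ [] := by simp
  have hlast1 : (e₁ :: b).getLast? = some ((e₁ :: b).getLast hne1) :=
    List.getLast?_eq_getLast hne1
  constructor
  · refine ⟨hc1, hne1, e₁, by simp, (e₁ :: b).getLast hne1, by rw [hlast1]; rfl, ?_⟩
    have h := hjunc2 _ (by rw [hlast1]; rfl) e₂ (by simp)
    rw [h]; exact hf.symm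
  · rw [IsGPath, List.Chain', List.isChain_append]
    refine ⟨hca, hc2, ?_⟩
    intro x hx y hy
    have h := hjunc1 x hx e₁ (by simp)
    simp only [List.head?_cons, Option.mem_def, Option.some.injEq] at hy
    subst hy
    rw [h]; exact hf

theorem aux_cycle_bound {V E : Type*}
    (src tgt : E → V) (w t : E → ℝ)
    (hw : ∀ e, 0 ≤ w e) (ht : ∀ e, 0 ≤ t e)
    (hcyc : ∀ es : List E, IsGCycle src tgt es → 1 ≤ (es.map t).sum)
    (α : ℝ) (hα : 0 < α)
    (hmax : IsGreatest
      {r : ℝ | ∃ es : List E, IsSimpleGCycle src tgt es ∧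
        r = (es.map w).sum / (es.map t).sum} α) :
    ∀ (n : ℕ) (es : List E), es.length ≤ n → IsGCycle src tgt es →
      (es.map w).sum ≤ α * (es.map t).sum := by
  intro n
  induction n with
  | zero =>
    intro es hlen hc
    have : es = [] := List.length_eq_zero_iff.mp (Nat.le_zero.mp hlen)
    exact absurd this hc.2.1
  | succ n ih =>
    intro es hlen hc
    by_cases hnd : (es.map src).Nodup
    · have hle := hmax.2 ⟨es, ⟨hc, hnd⟩, rfl⟩
      have ht1 : (1 : ℝ) ≤ (es.map t).sum := hcyc es hc
      have htpos : 0 < (es.map t).sum := lt_of_lt_of_le one_pos ht1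
      calc (es.map w).sum = ((es.map w).sum / (es.map t).sum) * (es.map t).sum := by
            field_simp
        _ ≤ α * (es.map t).sum := mul_le_mul_of_nonneg_right hle htpos.le
    · obtain ⟨a, e₁, b, e₂, c, hl, hf⟩ := exists_dup_decomp src es hnd
      subst hl
      obtain ⟨hpath, hne, hcond⟩ := hc
      obtain ⟨hC1, hC2path⟩ := cycle_and_path_of_decomp src tgt a e₁ b e₂ c hf hpath
      -- the outer cycle a ++ e₂ :: c
      have hnec : (e₂ :: c) ≠ [] := by simp
      have hlastC : (a ++ e₁ :: (b ++ e₂ :: c)).getLast? = (e₂ :: c).getLast? := by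
        rw [List.getLast?_append_of_ne_nil _ (by simp)]
        rw [show (e₁ :: (b ++ e₂ :: c)) = (e₁ :: b) ++ (e₂ :: c) by simp]
        rw [List.getLast?_append_of_ne_nil _ hnec]
      have hlastC2 : (a ++ e₂ :: c).getLast? = (e₂ :: c).getLast? :=
        List.getLast?_append_of_ne_nil _ hnec
      have hC2 : IsGCycle src tgt (a ++ e₂ :: c) := by
        refine ⟨hC2path, by simp, ?_⟩
        obtain ⟨e₀, he₀, eL, heL, htgt⟩ := hcond
        rw [hlastC] at heL
        cases a with
        | nil =>
          simp only [List.nil_append, List.head?_cons, Option.mem_def,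
            Option.some.injEq] at he₀ ⊢
          refine ⟨e₂, rfl, eL, heL, ?_⟩
          rw [htgt, ← he₀, hf]
        | cons x a' =>
          simp only [List.cons_append, List.head?_cons, Option.mem_def,
            Option.some.injEq] at he₀ ⊢
          refine ⟨e₀, he₀, eL, ?_, htgt⟩
          rw [List.cons_append] at hlastC2; rw [hlastC2]; exact heL
      -- lengths
      have hlen' : a.length + b.length + c.length + 2 ≤ n + 1 := by
        simp [List.length_append] at hlen; omega
      have h1 := ih (e₁ :: b) (by simp; omega) hC1
      have h2 := ih (a ++ e₂ :: c) (by simp [List.length_append]; omega) hC2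
      have hsum : ∀ f : E → ℝ,
          ((a ++ e₁ :: (b ++ e₂ :: c)).map f).sum
            = (((e₁ :: b)).map f).sum + ((a ++ e₂ :: c).map f).sum := by
        intro f
        simp [List.map_append, List.sum_append]
        ring
      rw [hsum w, hsum t]
      linarith

/-- In a finite directed graph with nonnegative edge rewards and times where every cycle
takes time at least `1`, if `α > 0` is the maximum reward-to-time ratio over simple
cycles, then every path `π` satisfies `w(π) ≤ α·t(π) + K` for some constant `K`. -/
theorem reward_le_ratio_mul_time_add_const {V E : Type*} [Fintype V] [Fintype E]
    (src tgt : E → V) (w t : E → ℝ)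
    (hw : ∀ e, 0 ≤ w e) (ht : ∀ e, 0 ≤ t e)
    (hcyc : ∀ es : List E, IsGCycle src tgt es → 1 ≤ (es.map t).sum)
    (α : ℝ) (hα : 0 < α)
    (hmax : IsGreatest
      {r : ℝ | ∃ es : List E, IsSimpleGCycle src tgt es ∧
        r = (es.map w).sum / (es.map t).sum} α) :
    ∃ K : ℝ, ∀ es : List E, IsGPath src tgt es →
      (es.map w).sum ≤ α * (es.map t).sum + K := by
  classical
  have cycA := aux_cycle_bound src tgt w t hw ht hcyc α hα hmax
  refine ⟨∑ e : E, w e, ?_⟩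
  have main : ∀ (n : ℕ) (es : List E), es.length ≤ n → IsGPath src tgt es →
      (es.map w).sum ≤ α * (es.map t).sum + ∑ e : E, w e := by
    intro n
    induction n with
    | zero =>
      intro es hlen hp
      have : es = [] := List.length_eq_zero_iff.mp (Nat.le_zero.mp hlen)
      subst this
      simpa using Finset.sum_nonneg (fun e _ => hw e)
    | succ n ih =>
      intro es hlen hp
      by_cases hnd : (es.map src).Nodup
      · have hnd' : es.Nodup := List.Nodup.of_map src hnd
        have h1 : (es.map w).sum = es.toFinset.sum w := (List.sum_toFinset w hnd').symm
        have h2 : es.toFinset.sum w ≤ ∑ e : E, w e :=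
          Finset.sum_le_sum_of_subset_of_nonneg (Finset.subset_univ _) (fun e _ _ => hw e)
        have h3 : 0 ≤ (es.map t).sum :=
          List.sum_nonneg (by intro x hx; obtain ⟨e, _, rfl⟩ := List.mem_map.mp hx; exact ht e)
        nlinarith
      · obtain ⟨a, e₁, b, e₂, c, hl, hf⟩ := exists_dup_decomp src es hnd
        subst hl
        obtain ⟨hC1, hC2path⟩ := cycle_and_path_of_decomp src tgt a e₁ b e₂ c hf hp
        have hlen' : a.length + b.length + c.length + 2 ≤ n + 1 := by
          simp [List.length_append] at hlen; omega
        have h1 := cycA (b.length + 1) (e₁ :: b) (by simp) hC1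
        have h2 := ih (a ++ e₂ :: c) (by simp [List.length_append]; omega) hC2path
        have hsum : ∀ f : E → ℝ,
            ((a ++ e₁ :: (b ++ e₂ :: c)).map f).sum
              = (((e₁ :: b)).map f).sum + ((a ++ e₂ :: c).map f).sum := by
          intro f
          simp [List.map_append, List.sum_append]
          ring
        rw [hsum w, hsum t]
        linarith
  intro es hp
  exact main es.length es le_rfl hp
end
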